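/- Let (K, δ) be a differential field of characteristic zero and (E, δ_E) an algebraic differential extension. Then there exists w ∈ E with δ_E(w) = 1 if and only if there exists v ∈ K with δ(v) = 1. -/

import Mathlib

open Polynomial in
/-- If `(E, δ_E)` is an algebraic differential extension of a differential field
`(K, δ)` of characteristic zero, then `E` contains an element with derivative `1` iff `K` does. -/
theorem stmt12 {K E : Type*} [Field K] [CharZero K] [Field E] [Algebra K E]
    [Algebra.IsAlgebraic K E]
    (δ : K → K)
    (hadd : ∀ a b : K, δ (a + b) = δ a + δ b)
    (hmul : ∀ a b : K, δ (a * b) = δ a * b + a * δ b)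
    (δE : E → E)
    (hEadd : ∀ x y : E, δE (x + y) = δE x + δE y)
    (hEmul : ∀ x y : E, δE (x * y) = δE x * y + x * δE y)
    (hcomp : ∀ a : K, δE (algebraMap K E a) = algebraMap K E (δ a)) :
    (∃ w : E, δE w = 1) ↔ (∃ v : K, δ v = 1) := by
  have hδ0 : δ 0 = 0 := by
    have h := hadd 0 0; rw [add_zero] at h; exact (left_eq_add.mp h)
  have hE0 : δE 0 = 0 := by
    have h := hEadd 0 0; rw [add_zero] at h; exact (left_eq_add.mp h)
  constructor
  · rintro ⟨w, hw⟩
    -- bundle δ as an additive hom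
    let D : K →+ K := AddMonoidHom.mk' δ hadd
    let DE : E →+ E := AddMonoidHom.mk' δE hEadd
    have hDE : ∀ x : E, DE x = δE x := fun _ => rfl
    -- power rule
    have hpow : ∀ i : ℕ, δE (w ^ (i + 1)) = (i + 1 : ℕ) * w ^ i := by
      intro i
      induction i with
      | zero =>
          have hE1 : δE 1 = 0 := by
            have h := hEmul 1 1
            rw [mul_one, one_mul, mul_one] at h
            exact (left_eq_add.mp h)
          simp [pow_succ, hEmul, hw, hE1]
      | succ k ih =>
          have : δE (w ^ (k + 1 + 1)) = δE (w ^ (k + 1) * w) := by ring_nf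
          rw [this, hEmul, ih, hw]
          push_cast
          ring
    set p := minpoly K w with hp
    have hint : IsIntegral K w := Algebra.IsIntegral.isIntegral w
    have hmonic : p.Monic := minpoly.monic hint
    set n := p.natDegree with hnd
    have hn : 0 < n := minpoly.natDegree_pos hint
    -- the "differentiated" polynomial
    set r : K[X] := ∑ i ∈ Finset.range n,
        C (δ (p.coeff i) + ((i : K) + 1) * p.coeff (i + 1)) * X ^ i with hr
    have haev : aeval w p = 0 := minpoly.aeval K w
    -- compute δE (aeval w p) = aeval w r
    have hcomp2 : aeval w r = 0 := by
      have h1 : aeval w p = ∑ i ∈ Finset.range (n + 1),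
          algebraMap K E (p.coeff i) * w ^ i := by
        rw [Polynomial.aeval_eq_sum_range]
        simp [Algebra.smul_def]
        rfl
      have h2 : δE (aeval w p) = 0 := by rw [haev, hE0]
      rw [h1, ← hDE, map_sum] at h2
      have h3 : ∀ i ∈ Finset.range (n + 1),
          DE (algebraMap K E (p.coeff i) * w ^ i)
            = algebraMap K E (δ (p.coeff i)) * w ^ i
              + algebraMap K E (p.coeff i) * (δE (w ^ i)) := by
        intro i _
        rw [hDE, hEmul, hcomp]
      rw [Finset.sum_congr rfl h3, Finset.sum_add_distrib] at h2
      -- second sum: shift index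
      have h4 : ∑ i ∈ Finset.range (n + 1),
          algebraMap K E (p.coeff i) * δE (w ^ i)
          = ∑ i ∈ Finset.range n,
            algebraMap K E (p.coeff (i + 1)) * (((i : E) + 1) * w ^ i) := by
        rw [Finset.sum_range_succ']
        have hE1 : δE (w ^ 0) = 0 := by
          have h := hEmul 1 1
          rw [mul_one, one_mul, mul_one] at h
          simpa using (left_eq_add.mp h)
        rw [hE1, mul_zero, add_zero]
        refine Finset.sum_congr rfl fun i _ => ?_
        rw [hpow i]
        push_cast
        ring
      have hδ1 : δ 1 = 0 := by
        have h := hmul 1 1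
        rw [mul_one, one_mul, mul_one] at h
        exact (left_eq_add.mp h)
      have h5 : ∑ i ∈ Finset.range (n + 1),
          algebraMap K E (δ (p.coeff i)) * w ^ i
          = ∑ i ∈ Finset.range n, algebraMap K E (δ (p.coeff i)) * w ^ i := by
        rw [Finset.sum_range_succ, hmonic.coeff_natDegree, hδ1, map_zero, zero_mul,
          add_zero]
      rw [h4, h5] at h2
      rw [hr, map_sum]
      rw [← h2, ← Finset.sum_add_distrib]
      refine Finset.sum_congr rfl fun i _ => ?_
      rw [map_mul, map_pow, aeval_X, aeval_C, map_add, map_mul, map_add, map_one]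
      push_cast
      ring
    -- degree of r is < degree of p, hence r = 0
    have hrdeg : r.degree < p.degree := by
      have h1 : r.degree < (n : WithBot ℕ) := by
        rw [hr]
        refine lt_of_le_of_lt (Polynomial.degree_sum_le _ _) ?_
        rw [Finset.sup_lt_iff (by exact_mod_cast WithBot.bot_lt_coe n)]
        intro i hi
        refine lt_of_le_of_lt (Polynomial.degree_C_mul_X_pow_le _ _) ?_
        exact_mod_cast Finset.mem_range.mp hi
      rw [Polynomial.degree_eq_natDegree hmonic.ne_zero]
      exact h1
    have hr0 : r = 0 := by
      by_contra hne
      exact absurd (minpoly.degree_le_of_ne_zero K w hne hcomp2) (not_le.mpr hrdeg)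
    -- extract the coefficient at n - 1
    have hcoeff : r.coeff (n - 1) = δ (p.coeff (n - 1)) + (n : K) := by
      rw [hr, Polynomial.finset_sum_coeff]
      rw [Finset.sum_eq_single (n - 1)]
      · rw [Polynomial.coeff_C_mul, Polynomial.coeff_X_pow, if_pos rfl, mul_one]
        have hsucc : n - 1 + 1 = n := Nat.succ_pred_eq_of_pos hn
        rw [hsucc, hmonic.coeff_natDegree, mul_one]
        congr 1
        have : ((n - 1 : ℕ) : K) + 1 = ((n - 1 + 1 : ℕ) : K) := by push_cast; ring
        rw [this, hsucc]
      · intro i _ hne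
        rw [Polynomial.coeff_C_mul, Polynomial.coeff_X_pow, if_neg (fun h => hne h.symm),
          mul_zero]
      · intro h
        exact absurd (Finset.mem_range.mpr (Nat.sub_lt hn one_pos)) h
    rw [hr0, Polynomial.coeff_zero] at hcoeff
    -- now δ a = -n for a := p.coeff (n-1)
    set a := p.coeff (n - 1) with ha
    have hda : δ a = -(n : K) := eq_neg_of_add_eq_zero_left hcoeff.symm
    have hnne : (n : K) ≠ 0 := Nat.cast_ne_zero.mpr hn.ne'
    refine ⟨-a / n, ?_⟩
    have hδneg : ∀ x : K, δ (-x) = -δ x := fun x => by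
      have h := hadd x (-x)
      rw [add_neg_cancel, hδ0] at h
      exact eq_neg_of_add_eq_zero_right h.symm
    have hδn : δ ((n : K) * (-a / n)) = (n : K) * δ (-a / n) := by
      have : ∀ m : ℕ, δ ((m : K) * (-a / n)) = (m : K) * δ (-a / n) := by
        intro m
        induction m with
        | zero => simp [hδ0]
        | succ k ih =>
            push_cast
            rw [add_mul, one_mul, hadd, ih]
            ring
      exact this n
    have hkey : (n : K) * (-a / n) = -a := by
      rw [mul_comm, div_mul_cancel₀ _ hnne]
    rw [hkey, hδneg, hda, neg_neg] at hδn
    exact mul_left_cancel₀ hnne (by rw [mul_one, ← hδn])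
  · rintro ⟨v, hv⟩
    exact ⟨algebraMap K E v, by rw [hcomp, hv, map_one]⟩
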